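/- Let X and Y be Banach spaces, let C1 ⊆ X be relatively norm compact and C2 ⊆ Y relatively weakly compact. Then C1 ⊗ C2 := {x ⊗ y : x ∈ C1, y ∈ C2} is relatively weakly compact in the projective tensor product X ⊗̂π Y. -/

import Mathlib

open Filter Topology NormedSpace
open scoped ENNReal NNReal

/-- `Z`, together with the continuous bilinear map `m`, is (a realization of) the projective
tensor product `X ⊗̂π Y`: the span of elementary tensors is dense, and every continuous bilinear
map into a Banach space lifts to a continuous linear map on `Z` with the same norm. -/
structure IsProjTensorProduct (X Y Z : Type*) [NormedAddCommGroup X] [NormedSpace ℝ X]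
    [NormedAddCommGroup Y] [NormedSpace ℝ Y] [NormedAddCommGroup Z] [NormedSpace ℝ Z]
    (m : X →L[ℝ] Y →L[ℝ] Z) : Prop where
  dense_span : Dense (Submodule.span ℝ {z : Z | ∃ x y, m x y = z} : Set Z)
  lift : ∀ (W : Type) [NormedAddCommGroup W] [NormedSpace ℝ W] [CompleteSpace W]
    (B : X →L[ℝ] Y →L[ℝ] W), ∃ T : Z →L[ℝ] W, ‖T‖ = ‖B‖ ∧ ∀ x y, T (m x y) = B x y

/-- A set is relatively weakly compact if its closure in the weak topology is weakly compact. -/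
def RelWeakCompact (X : Type*) [SeminormedAddCommGroup X] [NormedSpace ℝ X] (A : Set X) : Prop :=
  IsCompact (closure ((toWeakSpace ℝ X) '' A))

/-- A set is relatively norm compact if its norm closure is compact. -/
def RelNormCompact (X : Type*) [SeminormedAddCommGroup X] [NormedSpace ℝ X] (A : Set X) : Prop :=
  IsCompact (closure A)

/-- A sequence is weakly Cauchy if every continuous functional sends it to a convergent sequence. -/
def WeaklyCauchySeq {X : Type*} [SeminormedAddCommGroup X] [NormedSpace ℝ X] (x : ℕ → X) : Prop :=
  ∀ f : X →L[ℝ] ℝ, ∃ l : ℝ, Tendsto (fun n => f (x n)) atTop (nhds l)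

/-- A sequence is weakly null if it converges to `0` in the weak topology. -/
def WeaklyNullSeq {X : Type*} [SeminormedAddCommGroup X] [NormedSpace ℝ X] (x : ℕ → X) : Prop :=
  ∀ f : X →L[ℝ] ℝ, Tendsto (fun n => f (x n)) atTop (nhds 0)

/-- A set is weakly precompact if every sequence in it has a weakly Cauchy subsequence. -/
def WeaklyPrecompact {X : Type*} [SeminormedAddCommGroup X] [NormedSpace ℝ X] (A : Set X) : Prop :=
  ∀ x : ℕ → X, (∀ n, x n ∈ A) → ∃ φ : ℕ → ℕ, StrictMono φ ∧ WeaklyCauchySeq (x ∘ φ)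

/-- A (weakly) compact operator maps the closed unit ball to a relatively (weakly) compact set. -/
def WeaklyCompactOp {X Y : Type*} [SeminormedAddCommGroup X] [NormedSpace ℝ X]
    [SeminormedAddCommGroup Y] [NormedSpace ℝ Y] (T : X →L[ℝ] Y) : Prop :=
  RelWeakCompact Y (T '' Metric.closedBall 0 1)


open Filter Topology NormedSpace

section aux
variable {Z : Type*} [NormedAddCommGroup Z] [NormedSpace ℝ Z]

lemma weakSpace_t2 : T2Space (WeakSpace ℝ Z) := by
  constructor
  intro a b hab
  have hne : (toWeakSpace ℝ Z).symm a ≠ (toWeakSpace ℝ Z).symm b :=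
    fun h => hab ((toWeakSpace ℝ Z).symm.injective h)
  obtain ⟨f, hf⟩ := SeparatingDual.exists_separating_of_ne (R := ℝ) hne
  have hc : Continuous fun w : WeakSpace ℝ Z => f ((toWeakSpace ℝ Z).symm w) :=
    WeakBilin.eval_continuous ((topDualPairing ℝ Z).flip) f
  exact separated_by_continuous hc hf
end aux

section bdd
variable {Y : Type*} [NormedAddCommGroup Y] [NormedSpace ℝ Y]

lemma bound_of_weak_compact {K : Set (WeakSpace ℝ Y)} (hK : IsCompact K) :
    ∃ M : ℝ, ∀ w ∈ K, ‖(toWeakSpace ℝ Y).symm w‖ ≤ M := by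
  set g : K → (Y →L[ℝ] ℝ) →L[ℝ] ℝ :=
    fun w => inclusionInDoubleDual ℝ Y ((toWeakSpace ℝ Y).symm w.1) with hg
  have hpt : ∀ φ : Y →L[ℝ] ℝ, ∃ C, ∀ w : K, ‖g w φ‖ ≤ C := by
    intro φ
    have hc : ContinuousOn (fun w : WeakSpace ℝ Y => φ ((toWeakSpace ℝ Y).symm w)) K :=
      (WeakBilin.eval_continuous ((topDualPairing ℝ Y).flip) φ).continuousOn
    obtain ⟨C, hC⟩ := hK.exists_bound_of_continuousOn hc
    exact ⟨C, fun w => hC w.1 w.2⟩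
  obtain ⟨C, hC⟩ := banach_steinhaus hpt
  refine ⟨C, fun w hw => ?_⟩
  have h1 := hC ⟨w, hw⟩
  have h2 : ‖g ⟨w, hw⟩‖ = ‖(toWeakSpace ℝ Y).symm w‖ :=
    (inclusionInDoubleDualLi ℝ (E := Y)).norm_map ((toWeakSpace ℝ Y).symm w)
  rwa [h2] at h1
end bdd


theorem stmt1 {X Y Z : Type*} [NormedAddCommGroup X] [NormedSpace ℝ X] [CompleteSpace X] [NormedAddCommGroup Y] [NormedSpace ℝ Y] [CompleteSpace Y] [NormedAddCommGroup Z] [NormedSpace ℝ Z] [CompleteSpace Z]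
    (m : X →L[ℝ] Y →L[ℝ] Z) (hm : IsProjTensorProduct X Y Z m)
    (C1 : Set X) (C2 : Set Y) (hC1 : RelNormCompact X C1) (hC2 : RelWeakCompact Y C2) :
    RelWeakCompact Z (Set.image2 (fun x y => m x y) C1 C2) := by
  have hT2 : T2Space (WeakSpace ℝ Z) := weakSpace_t2
  set K1 : Set X := closure C1 with hK1def
  set K2 : Set (WeakSpace ℝ Y) := closure ((toWeakSpace ℝ Y) '' C2) with hK2def
  have hK1 : IsCompact K1 := hC1
  have hK2 : IsCompact K2 := hC2
  obtain ⟨M, hM⟩ := bound_of_weak_compact hK2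
  set M' : ℝ := max M 0 with hM'def
  set F : X × WeakSpace ℝ Y → WeakSpace ℝ Z :=
    fun p => toWeakSpace ℝ Z (m p.1 ((toWeakSpace ℝ Y).symm p.2)) with hFdef
  have hFcont : ContinuousOn F (K1 ×ˢ K2) := by
    rw [continuousOn_iff_continuous_restrict]
    apply WeakBilin.continuous_of_continuous_eval
    intro f
    show Continuous fun q : ↥(K1 ×ˢ K2) => f (m q.1.1 ((toWeakSpace ℝ Y).symm q.1.2))
    rw [continuous_iff_continuousAt]
    intro q0
    set x0 : X := q0.1.1 with hx0def
    set A : ↥(K1 ×ˢ K2) → ℝ :=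
      fun q => f (m (q.1.1 - x0) ((toWeakSpace ℝ Y).symm q.1.2)) with hAdef
    set B : ↥(K1 ×ˢ K2) → ℝ :=
      fun q => f (m x0 ((toWeakSpace ℝ Y).symm q.1.2)) with hBdef
    have hB : Continuous B := by
      have h1 : Continuous fun w : WeakSpace ℝ Y =>
          (f.comp (m x0)) ((toWeakSpace ℝ Y).symm w) :=
        WeakBilin.eval_continuous ((topDualPairing ℝ Y).flip) (f.comp (m x0))
      exact h1.comp (continuous_snd.comp continuous_subtype_val)
    have hA : Tendsto A (𝓝 q0) (𝓝 0) := by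
      refine squeeze_zero_norm (a := fun q : ↥(K1 ×ˢ K2) => ‖f‖ * ‖m‖ * M' * ‖q.1.1 - x0‖) ?_ ?_
      · intro q
        have hy : ‖(toWeakSpace ℝ Y).symm q.1.2‖ ≤ M' :=
          le_trans (hM _ q.2.2) (le_max_left _ _)
        have h1 : ‖A q‖ ≤ ‖f‖ * ‖m (q.1.1 - x0) ((toWeakSpace ℝ Y).symm q.1.2)‖ :=
          f.le_opNorm _
        have h2 : ‖m (q.1.1 - x0) ((toWeakSpace ℝ Y).symm q.1.2)‖ ≤
            ‖m‖ * ‖q.1.1 - x0‖ * ‖(toWeakSpace ℝ Y).symm q.1.2‖ := m.le_opNorm₂ _ _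
        have hm0 : (0:ℝ) ≤ ‖m‖ := m.opNorm_nonneg
        have hf0 : (0:ℝ) ≤ ‖f‖ := f.opNorm_nonneg
        have hx0' : (0:ℝ) ≤ ‖q.1.1 - x0‖ := norm_nonneg _
        have h4 : ‖m‖ * ‖q.1.1 - x0‖ * ‖(toWeakSpace ℝ Y).symm q.1.2‖ ≤
            ‖m‖ * ‖q.1.1 - x0‖ * M' :=
          mul_le_mul_of_nonneg_left hy (by positivity)
        calc ‖A q‖ ≤ ‖f‖ * ‖m (q.1.1 - x0) ((toWeakSpace ℝ Y).symm q.1.2)‖ := h1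
          _ ≤ ‖f‖ * (‖m‖ * ‖q.1.1 - x0‖ * ‖(toWeakSpace ℝ Y).symm q.1.2‖) :=
              mul_le_mul_of_nonneg_left h2 hf0
          _ ≤ ‖f‖ * (‖m‖ * ‖q.1.1 - x0‖ * M') := mul_le_mul_of_nonneg_left h4 hf0
          _ = ‖f‖ * ‖m‖ * M' * ‖q.1.1 - x0‖ := by ring
      · have h3 : Tendsto (fun q : ↥(K1 ×ˢ K2) => ‖q.1.1 - x0‖) (𝓝 q0) (𝓝 0) := by
          have : Continuous fun q : ↥(K1 ×ˢ K2) => ‖q.1.1 - x0‖ :=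
            ((continuous_fst.comp continuous_subtype_val).sub continuous_const).norm
          simpa [hx0def] using this.tendsto q0
        simpa using h3.const_mul (‖f‖ * ‖m‖ * M')
    have key : (fun q : ↥(K1 ×ˢ K2) => f (m q.1.1 ((toWeakSpace ℝ Y).symm q.1.2)))
        = fun q => A q + B q := by
      funext q
      simp [hAdef, hBdef, map_sub]
    rw [key]
    have hcomb := hA.add hB.continuousAt
    have hA0 : A q0 = 0 := by simp [hAdef, hx0def]
    unfold ContinuousAt
    simpa [hA0] using hcomb
  have hS : IsCompact (F '' (K1 ×ˢ K2)) := (hK1.prod hK2).image_of_continuousOn hFcont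
  apply IsCompact.of_isClosed_subset hS isClosed_closure
  apply closure_minimal ?_ hS.isClosed
  rintro - ⟨z, hz, rfl⟩
  obtain ⟨x, hx, y, hy, rfl⟩ := hz
  exact ⟨(x, toWeakSpace ℝ Y y), ⟨subset_closure hx, subset_closure ⟨y, hy, rfl⟩⟩, by simp [hFdef]⟩
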